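/- Let g : ℝ → ℝ be C^{1,1} (differentiable with Lipschitz derivative) and a < ū < b. Then the left derivative of conv_{[a,ū]} g at ū exceeds the derivative of conv_{[a,b]} g at ū by at most Lip(g')·(b − ū): (conv_{[a,ū]} g)'(ū−) − (conv_{[a,b]} g)'(ū) ≤ Lip(g')·(b − ū). -/

import Mathlib

open Set Filter Topology

/-- The convex envelope of `g` on the interval `[a,b]`: the pointwise supremum of all
convex functions on `[a,b]` lying below `g` on `[a,b]`. -/
noncomputable def convEnv (a b : ℝ) (g : ℝ → ℝ) : ℝ → ℝ :=
  fun u => sSup {y : ℝ | ∃ h : ℝ → ℝ, ConvexOn ℝ (Set.Icc a b) h ∧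
    (∀ x ∈ Set.Icc a b, h x ≤ g x) ∧ y = h u}

lemma affine_convexOn (c C u : ℝ) (s : Set ℝ) (hs : Convex ℝ s) :
    ConvexOn ℝ s (fun x => c + C * (x - u)) := by
  refine ⟨hs, fun x _ y _ p q hp hq hpq => le_of_eq ?_⟩
  simp only [smul_eq_mul]
  linear_combination (c - C*u) * hpq.symm

lemma minorant_exists {g : ℝ → ℝ} (hg : Continuous g) {p q : ℝ} (hpq : p ≤ q) :
    ∃ h0 : ℝ → ℝ, ConvexOn ℝ (Icc p q) h0 ∧ ∀ x ∈ Icc p q, h0 x ≤ g x := by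
  obtain ⟨x0, -, hx0⟩ := isCompact_Icc.exists_isMinOn (nonempty_Icc.2 hpq) hg.continuousOn
  exact ⟨fun _ => g x0, convexOn_const _ (convex_Icc _ _), fun x hx => isMinOn_iff.1 hx0 x hx⟩

lemma convEnv_bddAbove {g : ℝ → ℝ} {p q u : ℝ} (hu : u ∈ Icc p q) :
    BddAbove {y : ℝ | ∃ h : ℝ → ℝ, ConvexOn ℝ (Set.Icc p q) h ∧
      (∀ x ∈ Set.Icc p q, h x ≤ g x) ∧ y = h u} := by
  refine ⟨g u, ?_⟩
  rintro y ⟨h, -, hle, rfl⟩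
  exact hle u hu

lemma convEnv_le {g : ℝ → ℝ} (hg : Continuous g) {p q u : ℝ} (hpq : p ≤ q) (hu : u ∈ Icc p q) :
    convEnv p q g u ≤ g u := by
  obtain ⟨h0, h0c, h0le⟩ := minorant_exists hg hpq
  refine csSup_le ⟨h0 u, h0, h0c, h0le, rfl⟩ ?_
  rintro y ⟨h, -, hle, rfl⟩
  exact hle u hu

lemma le_convEnv {g h : ℝ → ℝ} {p q u : ℝ} (hc : ConvexOn ℝ (Icc p q) h)
    (hle : ∀ x ∈ Icc p q, h x ≤ g x) (hu : u ∈ Icc p q) :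
    h u ≤ convEnv p q g u :=
  le_csSup (convEnv_bddAbove hu) ⟨h, hc, hle, rfl⟩

lemma convEnv_convexOn {g : ℝ → ℝ} (hg : Continuous g) {p q : ℝ} (hpq : p ≤ q) :
    ConvexOn ℝ (Icc p q) (convEnv p q g) := by
  obtain ⟨h0, h0c, h0le⟩ := minorant_exists hg hpq
  refine ⟨convex_Icc _ _, fun x hx y hy s t hs ht hst => ?_⟩
  have hmem : s • x + t • y ∈ Icc p q := (convex_Icc p q) hx hy hs ht hst
  refine csSup_le ⟨h0 _, h0, h0c, h0le, rfl⟩ ?_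
  rintro z ⟨h, hc, hle, rfl⟩
  calc h (s • x + t • y) ≤ s • h x + t • h y := hc.2 hx hy hs ht hst
    _ ≤ s • convEnv p q g x + t • convEnv p q g y := by
        have h1 := le_convEnv hc hle hx
        have h2 := le_convEnv hc hle hy
        simp only [smul_eq_mul]
        nlinarith

-- Taylor-type inequality with Lipschitz derivative (constant M, not M/2; suffices)
lemma taylor_lb {g : ℝ → ℝ} {M : NNReal} (hg : Differentiable ℝ g)
    (hM : LipschitzWith M (deriv g)) (x y : ℝ) :
    g x + deriv g x * (y - x) - (M : ℝ) * (y - x)^2 ≤ g y := by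
  rcases lt_trichotomy x y with hxy | rfl | hyx
  · obtain ⟨ξ, hξ, hs⟩ := exists_hasDerivAt_eq_slope g (deriv g) hxy
      hg.continuous.continuousOn (fun t _ => (hg t).hasDerivAt)
    have hd : g y - g x = deriv g ξ * (y - x) := by
      rw [eq_div_iff (sub_ne_zero.2 hxy.ne')] at hs; linarith [hs]
    have hLip : |deriv g ξ - deriv g x| ≤ (M : ℝ) * |ξ - x| := by
      have := hM.dist_le_mul ξ x
      rwa [Real.dist_eq, Real.dist_eq] at this
    have h1 : |ξ - x| ≤ y - x := by
      rw [abs_of_pos (by linarith [hξ.1])]; linarith [hξ.2]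
    have h2 : deriv g ξ - deriv g x ≥ -((M:ℝ) * (y - x)) := by
      have := (abs_le.1 hLip).1
      have hM0 : (0:ℝ) ≤ (M:ℝ) := M.2
      nlinarith
    nlinarith [sq_nonneg (y - x)]
  · simp
  · obtain ⟨ξ, hξ, hs⟩ := exists_hasDerivAt_eq_slope g (deriv g) hyx
      hg.continuous.continuousOn (fun t _ => (hg t).hasDerivAt)
    have hd : g x - g y = deriv g ξ * (x - y) := by
      rw [eq_div_iff (sub_ne_zero.2 hyx.ne')] at hs; linarith [hs]
    have hLip : |deriv g ξ - deriv g x| ≤ (M : ℝ) * |ξ - x| := by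
      have := hM.dist_le_mul ξ x
      rwa [Real.dist_eq, Real.dist_eq] at this
    have h1 : |ξ - x| ≤ x - y := by
      rw [abs_of_neg (by linarith [hξ.2])]; linarith [hξ.1]
    have h2 : deriv g ξ - deriv g x ≤ (M:ℝ) * (x - y) := by
      have := (abs_le.1 hLip).2
      have hM0 : (0:ℝ) ≤ (M:ℝ) := M.2
      nlinarith
    nlinarith [sq_nonneg (x - y)]

lemma convEnv_right_endpoint {g : ℝ → ℝ} {M : NNReal} (hg : Differentiable ℝ g)
    (hM : LipschitzWith M (deriv g)) {p q : ℝ} (hpq : p < q) :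
    convEnv p q g q = g q := by
  set K := deriv g q + (M : ℝ) * (q - p) with hK
  have hψ : ∀ x ∈ Icc p q, g q + K * (x - q) ≤ g x := by
    intro x hx
    rcases eq_or_lt_of_le hx.2 with rfl | hxq
    · simp
    · obtain ⟨ξ, hξ, hs⟩ := exists_hasDerivAt_eq_slope g (deriv g) hxq
        hg.continuous.continuousOn (fun t _ => (hg t).hasDerivAt)
      rw [eq_div_iff (sub_ne_zero.2 hxq.ne')] at hs
      have hLip : |deriv g ξ - deriv g q| ≤ (M : ℝ) * |ξ - q| := by
        have := hM.dist_le_mul ξ q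
        rwa [Real.dist_eq, Real.dist_eq] at this
      have h1 : |ξ - q| ≤ q - p := by
        rw [abs_of_neg (by linarith [hξ.2])]; linarith [hξ.1, hx.1]
    -- deriv g ξ ≤ K
      have h2 : deriv g ξ ≤ K := by
        have := (abs_le.1 hLip).2
        have hM0 : (0:ℝ) ≤ (M:ℝ) := M.2
        nlinarith
      nlinarith [hs, hxq]
  have h1 : g q ≤ convEnv p q g q := by
    have := le_convEnv (g := g) (affine_convexOn (g q) K q _ (convex_Icc p q)) hψ
      (right_mem_Icc.2 hpq.le)
    simpa using this
  exact le_antisymm (convEnv_le hg.continuous hpq.le (right_mem_Icc.2 hpq.le)) h1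

lemma deriv_le_of_affine_minorant {g : ℝ → ℝ} {M : NNReal} (hg : Differentiable ℝ g)
    (hM : LipschitzWith M (deriv g)) {a u C d : ℝ} (hau : a < u)
    (hd : HasDerivWithinAt (convEnv a u g) d (Icc a u) u)
    (hψ : ∀ x ∈ Icc a u, g u + C * (x - u) ≤ g x) : d ≤ C := by
  have hEq : convEnv a u g u = g u := convEnv_right_endpoint hg hM hau
  have hne : (𝓝[Icc a u \ {u}] u).NeBot := by
    rw [Icc_sdiff_right, nhdsWithin_Ico_eq_nhdsLT hau]
    infer_instance
  refine le_of_tendsto (hasDerivWithinAt_iff_tendsto_slope.1 hd) ?_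
  filter_upwards [self_mem_nhdsWithin] with z hz
  obtain ⟨hz1, hz2⟩ := hz
  have hzu : z < u := lt_of_le_of_ne hz1.2 hz2
  have hEz : g u + C * (z - u) ≤ convEnv a u g z :=
    le_convEnv (affine_convexOn (g u) C u _ (convex_Icc a u)) hψ hz1
  rw [slope_def_field]
  rw [div_le_iff_of_neg (by linarith : z - u < 0)]
  rw [hEq]
  linarith

lemma slope_tendsto_right {f : ℝ → ℝ} {a b u d : ℝ} (hau : a < u) (hub : u < b)
    (hd : HasDerivWithinAt f d (Icc a b) u) :
    Tendsto (slope f u) (𝓝[>] u) (𝓝 d) := by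
  refine (hasDerivWithinAt_iff_tendsto_slope.1 hd).mono_left ?_
  rw [← nhdsWithin_Ioc_eq_nhdsGT hub]
  exact nhdsWithin_mono _ (fun z hz => ⟨⟨(hau.trans hz.1).le, hz.2⟩, hz.1.ne'⟩)

lemma supportLine {g : ℝ → ℝ} (hg : Continuous g) {a b u d : ℝ} (hau : a < u) (hub : u < b)
    (hd : HasDerivWithinAt (convEnv a b g) d (Icc a b) u) :
    ∀ x ∈ Icc a b, convEnv a b g u + d * (x - u) ≤ convEnv a b g x := by
  set E := convEnv a b g with hE
  have hconv : ConvexOn ℝ (Icc a b) E := convEnv_convexOn hg (hau.trans hub).le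
  have hu : u ∈ Icc a b := ⟨hau.le, hub.le⟩
  have hright := slope_tendsto_right hau hub hd
  intro x hx
  rcases lt_trichotomy x u with hxu | rfl | hux
  · -- slope E u x ≤ d
    have hsl : slope E u x ≤ d := by
      refine ge_of_tendsto hright ?_
      filter_upwards [self_mem_nhdsWithin, Ioo_mem_nhdsGT_of_mem (left_mem_Ico.2 hub)]
        with v hv1 hv2
      have hvs : v ∈ Icc a b := ⟨(hau.trans hv1).le, hv2.2.le⟩
      have := hconv.secant_mono hu hx hvs hxu.ne hv1.ne' (hxu.le.trans hv1.le)
      simpa [slope_def_field] using this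
    rw [slope_def_field] at hsl
    rw [div_le_iff_of_neg (by linarith : x - u < 0)] at hsl
    linarith
  · simp
  · have hsl : d ≤ slope E u x := by
      refine le_of_tendsto hright ?_
      filter_upwards [self_mem_nhdsWithin, Ioo_mem_nhdsGT_of_mem (left_mem_Ico.2 hux)]
        with v hv1 hv2
      have hvs : v ∈ Icc a b := ⟨(hau.trans hv1).le, hv2.2.le.trans hx.2⟩
      have := hconv.secant_mono hu hvs hx hv1.ne' hux.ne' hv2.2.le
      simpa [slope_def_field] using this
    rw [slope_def_field] at hsl
    rw [le_div_iff₀ (by linarith : 0 < x - u)] at hsl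
    linarith

lemma contact_exists {g : ℝ → ℝ} (hg : Continuous g) {a b u d : ℝ} (hau : a < u) (hub : u < b)
    (hd : HasDerivWithinAt (convEnv a b g) d (Icc a b) u)
    (hgap : convEnv a b g u < g u) :
    ∃ q ∈ Ioc u b, g q = convEnv a b g u + d * (q - u) := by
  set E := convEnv a b g with hE
  by_contra hcon
  push_neg at hcon
  have hab : a ≤ b := (hau.trans hub).le
  have hsupp := supportLine hg hau hub hd
  have hElg : ∀ x ∈ Icc a b, E u + d * (x - u) ≤ g x := fun x hx =>
    (hsupp x hx).trans (convEnv_le hg hab hx)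
  -- g - line is positive on [u,b]
  have hpos : ∀ x ∈ Icc u b, 0 < g x - (E u + d * (x - u)) := by
    intro x hx
    rcases eq_or_lt_of_le hx.1 with rfl | hux
    · simpa using hgap
    · have h1 := hElg x ⟨(hau.trans hux).le, hx.2⟩
      have h2 := hcon x ⟨hux, hx.2⟩
      have := lt_of_le_of_ne h1 (fun h => h2 h.symm)
      linarith
  obtain ⟨x0, hx0m, hx0⟩ := isCompact_Icc.exists_isMinOn (nonempty_Icc.2 hub.le)
    ((hg.sub (by continuity)).continuousOn :
      ContinuousOn (fun x => g x - (E u + d * (x - u))) (Icc u b))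
  set ε := g x0 - (E u + d * (x0 - u)) with hε
  have hε0 : 0 < ε := hpos x0 hx0m
  set s := ε / (b - u) with hs
  have hs0 : 0 < s := div_pos hε0 (by linarith)
  -- the tilted line is a minorant
  have htilt : ∀ x ∈ Icc a b, E u + (d + s) * (x - u) ≤ g x := by
    intro x hx
    rcases le_or_gt x u with hxu | hux
    · have := hElg x hx
      nlinarith
    · have hxm : x ∈ Icc u b := ⟨hux.le, hx.2⟩
      have hmin : ε ≤ g x - (E u + d * (x - u)) := isMinOn_iff.1 hx0 x hxm
      have : s * (x - u) ≤ ε := by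
        rw [hs, div_mul_eq_mul_div, div_le_iff₀ (by linarith : (0:ℝ) < b - u)]
        nlinarith [hx.2]
      linarith
  have hEt : ∀ x ∈ Icc a b, E u + (d + s) * (x - u) ≤ E x := fun x hx =>
    le_convEnv (affine_convexOn (E u) (d + s) u _ (convex_Icc a b)) htilt hx
  have hcontr : d + s ≤ d := by
    refine ge_of_tendsto (slope_tendsto_right (f := convEnv a b g) hau hub hd) ?_
    filter_upwards [self_mem_nhdsWithin, Ioo_mem_nhdsGT_of_mem (left_mem_Ico.2 hub)]
      with v hv1 hv2
    have hvs : v ∈ Icc a b := ⟨(hau.trans hv1).le, hv2.2.le⟩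
    have h2 : convEnv a b g u + (d + s) * (v - u) ≤ convEnv a b g v := hEt v hvs
    rw [slope_def_field, le_div_iff₀ (sub_pos.2 hv2.1)]
    linarith
  linarith

theorem stmt6 (g : ℝ → ℝ) (M : NNReal) (hg : Differentiable ℝ g)
    (hM : LipschitzWith M (deriv g)) (a ubar b : ℝ)
    (h1 : a < ubar) (h2 : ubar < b) (d₁ d₂ : ℝ)
    (hd₁ : HasDerivWithinAt (convEnv a ubar g) d₁ (Set.Icc a ubar) ubar)
    (hd₂ : HasDerivWithinAt (convEnv a b g) d₂ (Set.Icc a b) ubar) :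
    d₁ - d₂ ≤ (M : ℝ) * (b - ubar) := by
  have hgc : Continuous g := hg.continuous
  have hab : a ≤ b := (h1.trans h2).le
  have hub : ubar ∈ Icc a b := ⟨h1.le, h2.le⟩
  have hM0 : (0:ℝ) ≤ (M:ℝ) := M.2
  have hMB : 0 ≤ (M:ℝ) * (b - ubar) := mul_nonneg hM0 (by linarith)
  have hle2 : convEnv a b g ubar ≤ g ubar := convEnv_le hgc hab hub
  have hsupp := supportLine hgc h1 h2 hd₂
  have hsuppg : ∀ x ∈ Icc a b, convEnv a b g ubar + d₂ * (x - ubar) ≤ g x := fun x hx =>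
    (hsupp x hx).trans (convEnv_le hgc hab hx)
  by_cases hA : convEnv a b g ubar = g ubar
  · -- touching case : d₁ ≤ d₂
    have hd1le : d₁ ≤ d₂ := by
      refine deriv_le_of_affine_minorant hg hM h1 hd₁ ?_
      intro x hx
      have := hsuppg x ⟨hx.1, hx.2.trans h2.le⟩
      rw [hA] at this
      linarith
    linarith
  · have hgap : convEnv a b g ubar < g ubar := lt_of_le_of_ne hle2 hA
    -- M must be positive
    have hMpos : 0 < (M:ℝ) := by
      rcases eq_or_lt_of_le hM0 with hM0' | h
      · exfalso
        have hconst : ∀ x y : ℝ, deriv g x = deriv g y := by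
          intro x y
          have := hM.dist_le_mul x y
          rw [← hM0'] at this
          simpa [dist_le_zero] using this
        have hmono : Monotone (deriv g) := fun x y _ => le_of_eq (hconst x y)
        have hconv : ConvexOn ℝ (Icc a b) g :=
          (hmono.convexOn_univ_of_deriv hg).subset (subset_univ _) (convex_Icc a b)
        have := le_convEnv (g := g) hconv (fun x _ => le_refl (g x)) hub
        linarith
      · exact h
    -- contact point to the right
    obtain ⟨q, hq, hgq⟩ := contact_exists hgc h1 h2 hd₂ hgap
    set δ := g ubar - convEnv a b g ubar with hδ
    have hδ0 : 0 < δ := by simp [hδ]; linarith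
    set β := q - ubar with hβ
    have hβ0 : 0 < β := by simp [hβ]; linarith [hq.1]
    have hβB : β ≤ b - ubar := by simp [hβ]; linarith [hq.2]
    have hTq := taylor_lb hg hM ubar q
    -- key : (deriv g ubar) * β ≤ d₂ * β + M * β^2 - δ
    have key1 : deriv g ubar * β ≤ d₂ * β + (M:ℝ) * β^2 - δ := by
      have hgq' : g q = g ubar - δ + d₂ * β := by rw [hgq, hδ]; ring
      rw [← hβ] at hTq
      nlinarith [hTq]
    have hC : d₁ ≤ d₂ + (M:ℝ) * (b - ubar) := by
      refine deriv_le_of_affine_minorant hg hM h1 hd₁ ?_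
      intro x hx
      have hxb : x ∈ Icc a b := ⟨hx.1, hx.2.trans h2.le⟩
      set t := ubar - x with ht
      have ht0 : 0 ≤ t := by simp [ht]; linarith [hx.2]
      by_cases hcase : δ ≤ (M:ℝ) * (b - ubar) * t
      · have hline := hsuppg x hxb
        nlinarith [hline]
      · push_neg at hcase
        have hT := taylor_lb hg hM ubar x
        -- need : deriv g ubar * t ≤ (d₂ + M*(b-ubar)) * t - M * t^2
        have hMβt : (M:ℝ) * β * t ≤ δ := by nlinarith
        have hfinal : deriv g ubar * t ≤ (d₂ + (M:ℝ) * (b - ubar)) * t - (M:ℝ) * t^2 := by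
          nlinarith [mul_le_mul_of_nonneg_right key1 ht0, mul_nonneg (mul_nonneg hM0 hβ0.le) ht0,
            mul_le_mul_of_nonneg_right hMβt ht0, mul_nonneg hM0 (mul_nonneg ht0 (sub_nonneg.2 hβB))]
        have hxt : x - ubar = -t := by rw [ht]; ring
        rw [hxt] at hT ⊢
        nlinarith [hT, hfinal]
    linarith
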